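/- Let Σ, Σ' ⊆ S and let y ∈ N(Σ, Σ'). Then the conjugation map Int_y : W_Σ → W_{Σ'}, w ↦ y w y⁻¹, preserves the length function ℓ of (W, S); consequently it is an isomorphism of Coxeter systems (W_Σ, Σ) ≅ (W_{Σ'}, Σ'), so that y Σ y⁻¹ = Σ', and it restricts to a bijection T_Σ ≅ T_{Σ'} between the sets of reflections. -/

import Mathlib

/-!
Relative Coxeter groups: common definitions.

`(W, S)` is a Coxeter system (Mathlib's `CoxeterSystem M W`), `ℓ = cs.length`.
For `w : W`, `invSet cs w` is the set `T(w)` of left inversions of `w`, and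
`descSet cs w = T(w) ∩ S` is `D(w)`.  For a subset `Sg ⊆ S` (playing the role of `Σ`),
`par Sg` is the standard parabolic subgroup `W_Σ`, `parRefl Sg` its set of
reflections `T_Σ`, `minRight cs Sg = W^Σ`, `minLeft cs Sg = ^ΣW`,
`relN cs Sg Sg' = N(Σ, Σ')`, `IsLongest cs Sg w` says `w` is a longest element of `W_Σ`,
`longest cs Sg` is the longest element `w₀^Σ`, `relW cs Sg = W̃`,
`complSet cs Sg = Σ^∁`, `tilde cs Sg s = s̃ = w₀^{Σ∪{s}} w₀^Σ`, `relS cs Sg = S̃`,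
`relLength cs Sg = ℓ̃ : W → ℕ∞`, and `GoodSubset cs Sg` records the standing
hypotheses (1) and (2) on `Σ`.
-/

namespace RelativeCoxeter

variable {B W : Type*} [Group W] {M : CoxeterMatrix B}

/-- The set `S` of simple reflections of the Coxeter system. -/
def simpleSet (cs : CoxeterSystem M W) : Set W := Set.range cs.simple

/-- `T(w)`: the set of left inversions of `w`, i.e. reflections `t` with `ℓ(tw) < ℓ(w)`. -/
def invSet (cs : CoxeterSystem M W) (w : W) : Set W :=
  {t | cs.IsReflection t ∧ cs.length (t * w) < cs.length w}

/-- `D(w) = T(w) ∩ S`. -/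
def descSet (cs : CoxeterSystem M W) (w : W) : Set W :=
  invSet cs w ∩ simpleSet cs

/-- The standard parabolic subgroup `W_Σ` generated by `Σ`. -/
def par (Sg : Set W) : Subgroup W := Subgroup.closure Sg

/-- `T_Σ`: the set of reflections of the Coxeter system `(W_Σ, Σ)`. -/
def parRefl (Sg : Set W) : Set W :=
  {t | ∃ u ∈ par Sg, ∃ s ∈ Sg, t = u * s * u⁻¹}

/-- `W^Σ = {w : T(w⁻¹) ∩ T_Σ = ∅}`, minimal-length representatives of `W/W_Σ`. -/
def minRight (cs : CoxeterSystem M W) (Sg : Set W) : Set W :=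
  {w | invSet cs w⁻¹ ∩ parRefl Sg = ∅}

/-- `^ΣW = {w : T(w) ∩ T_Σ = ∅}`, minimal-length representatives of `W_Σ\W`. -/
def minLeft (cs : CoxeterSystem M W) (Sg : Set W) : Set W :=
  {w | invSet cs w ∩ parRefl Sg = ∅}

/-- `N(Σ, Σ') = {y ∈ W^Σ ∩ ^{Σ'}W : y W_Σ y⁻¹ = W_{Σ'}}`. -/
def relN (cs : CoxeterSystem M W) (Sg Sg' : Set W) : Set W :=
  {y | y ∈ minRight cs Sg ∧ y ∈ minLeft cs Sg' ∧
    (fun u => y * u * y⁻¹) '' (par Sg : Set W) = (par Sg' : Set W)}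

/-- `w` is a longest element of `W_Σ`. -/
def IsLongest (cs : CoxeterSystem M W) (Sg : Set W) (w : W) : Prop :=
  w ∈ par Sg ∧ ∀ u ∈ par Sg, cs.length u ≤ cs.length w

/-- The longest element `w₀^Σ` of `W_Σ` (defined when it exists; junk value `1` otherwise). -/
noncomputable def longest (cs : CoxeterSystem M W) (Sg : Set W) : W :=
  letI := Classical.propDecidable (∃ w, IsLongest cs Sg w)
  if h : ∃ w, IsLongest cs Sg w then h.choose else 1

/-- `W̃ = {w : w W_Σ w⁻¹ = W_Σ and T(w) ∩ T_Σ = ∅}`. -/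
def relW (cs : CoxeterSystem M W) (Sg : Set W) : Set W :=
  {w | (fun u => w * u * w⁻¹) '' (par Sg : Set W) = (par Sg : Set W) ∧
    invSet cs w ∩ parRefl Sg = ∅}

/-- `Σ^∁ = {s ∈ S ∖ Σ : W_{Σ∪{s}} is finite}`. -/
def complSet (cs : CoxeterSystem M W) (Sg : Set W) : Set W :=
  {s ∈ simpleSet cs \ Sg | ((par (Sg ∪ {s}) : Set W)).Finite}

/-- `s̃ = w₀^{Σ∪{s}} w₀^Σ`. -/
noncomputable def tilde (cs : CoxeterSystem M W) (Sg : Set W) (s : W) : W :=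
  longest cs (Sg ∪ {s}) * longest cs Sg

/-- `S̃ = {s̃ : s ∈ Σ^∁}`. -/
noncomputable def relS (cs : CoxeterSystem M W) (Sg : Set W) : Set W :=
  {w | ∃ s ∈ complSet cs Sg, w = tilde cs Sg s}

/-- `ℓ̃(w) ∈ ℕ ∪ {∞}`: the minimal `q` such that `w = w₁ ⋯ w_q` with all `w_i ∈ S̃`. -/
noncomputable def relLength (cs : CoxeterSystem M W) (Sg : Set W) (w : W) : ℕ∞ :=
  sInf {q : ℕ∞ | ∃ l : List W, (∀ x ∈ l, x ∈ relS cs Sg) ∧ l.prod = w ∧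
    (l.length : ℕ∞) = q}

/-- The standing hypotheses on `Σ`: `Σ ⊆ S`, `W_Σ` is finite, and for every `Σ'` with
`Σ ⊆ Σ' ⊆ S` and `W_{Σ'}` finite, the longest element `w₀^{Σ'}` normalises `W_Σ`. -/
def GoodSubset (cs : CoxeterSystem M W) (Sg : Set W) : Prop :=
  Sg ⊆ simpleSet cs ∧ ((par Sg : Set W)).Finite ∧
  ∀ Sg' : Set W, Sg ⊆ Sg' → Sg' ⊆ simpleSet cs → ((par Sg' : Set W)).Finite →
    ∀ w0 : W, IsLongest cs Sg' w0 →
      (fun u => w0 * u * w0⁻¹) '' (par Sg : Set W) = (par Sg : Set W)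

variable (cs : CoxeterSystem M W)

section Aux

open CoxeterSystem List
open scoped Classical

local prefix:100 "s" => cs.simple
local prefix:100 "π" => cs.wordProd

private noncomputable def eta (i : B) : W × ZMod 2 → W × ZMod 2 :=
  fun x => (s i * x.1 * s i, x.2 + if x.1 = s i then 1 else 0)

private lemma conj_simple_eq_iff (i : B) (t : W) :
    s i * t * s i = s i ↔ t = s i := by
  constructor
  · intro h
    have := congrArg (fun z => s i * z * s i) h
    simpa [mul_assoc, cs.simple_mul_simple_cancel_left, cs.simple_mul_simple_self] using this
  · rintro rfl
    simp [mul_assoc, cs.simple_mul_simple_self]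

private lemma eta_invol (i : B) : Function.Involutive (eta cs i) := by
  intro x
  simp only [eta, conj_simple_eq_iff]
  refine Prod.ext ?_ ?_
  · show s i * (s i * x.1 * s i) * s i = x.1
    simp [mul_assoc, cs.simple_mul_simple_cancel_left, cs.simple_mul_simple_self]
  · show x.2 + _ + _ = x.2
    have h2 : (1 : ZMod 2) + 1 = 0 := by decide
    rcases eq_or_ne x.1 (s i) with h | h <;> simp [h, add_assoc, h2]

private noncomputable def etaPerm (i : B) : Equiv.Perm (W × ZMod 2) :=
  (eta_invol cs i).toPerm

private lemma etaPerm_apply (i : B) (x : W × ZMod 2) :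
    etaPerm cs i x = (s i * x.1 * s i, x.2 + if x.1 = s i then 1 else 0) := rfl

/-- character for the braid check -/
private noncomputable def chi (i j : B) (t : W) : ZMod 2 :=
  (if t = s j then 1 else 0) + (if t = s j * s i * s j then 1 else 0)

private lemma etaPerm_mul_apply (i j : B) (x : W × ZMod 2) :
    (etaPerm cs i * etaPerm cs j) x =
      ((s i * s j) * x.1 * (s i * s j)⁻¹, x.2 + chi cs i j x.1) := by
  rcases x with ⟨t, e⟩
  simp only [Equiv.Perm.mul_apply, etaPerm_apply, chi]
  refine Prod.ext ?_ ?_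
  · show s i * (s j * t * s j) * s i = (s i * s j) * t * (s i * s j)⁻¹
    simp [mul_assoc, cs.inv_simple]
  · show e + _ + _ = e + _
    have : (s j * t * s j = s i) ↔ (t = s j * s i * s j) := by
      constructor
      · intro h; have := congrArg (fun z => s j * z * s j) h; simpa [mul_assoc,
          cs.simple_mul_simple_cancel_left] using this
      · rintro rfl; simp [mul_assoc, cs.simple_mul_simple_cancel_left, cs.simple_mul_simple_self]
    rw [this]
    ring

private lemma etaPerm_pow_apply (i j : B) (n : ℕ) (x : W × ZMod 2) :
    ((etaPerm cs i * etaPerm cs j) ^ n) x =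
      ((s i * s j) ^ n * x.1 * ((s i * s j) ^ n)⁻¹,
        x.2 + ∑ k ∈ Finset.range n, chi cs i j ((s i * s j) ^ k * x.1 * ((s i * s j) ^ k)⁻¹)) := by
  induction n with
  | zero => simp
  | succ n ih =>
    rw [pow_succ', Equiv.Perm.mul_apply, ih, etaPerm_mul_apply, Finset.sum_range_succ]
    refine Prod.ext ?_ ?_
    · show (s i * s j) * ((s i * s j) ^ n * x.1 * ((s i * s j)^n)⁻¹) * (s i * s j)⁻¹ = _
      simp [pow_succ', mul_inv_rev, mul_assoc]
    · show x.2 + _ + _ = x.2 + (_ + _)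
      rw [add_assoc]


private lemma sj_mul_pow (i j : B) (k : ℕ) :
    s j * (s i * s j) ^ k = ((s i * s j)⁻¹) ^ k * s j := by
  induction k with
  | zero => simp
  | succ k ih =>
    rw [pow_succ, ← mul_assoc, ih, pow_succ]
    have : s j * (s i * s j) = (s i * s j)⁻¹ * s j := by
      simp [mul_inv_rev, cs.inv_simple, mul_assoc]
    rw [mul_assoc, this, ← mul_assoc]

private lemma conjB (i j : B) (k : ℕ) :
    ((s i * s j) ^ k)⁻¹ * s j * (s i * s j) ^ k = ((s i * s j)⁻¹) ^ (2 * k) * s j := by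
  rw [mul_assoc, sj_mul_pow cs i j k, two_mul, pow_add, inv_pow, mul_assoc]

private lemma conjC (i j : B) (k : ℕ) :
    ((s i * s j) ^ k)⁻¹ * (s j * s i * s j) * (s i * s j) ^ k
      = ((s i * s j)⁻¹) ^ (2 * k + 1) * s j := by
  set p := s i * s j with hp
  have hq : s j * s i * s j = p⁻¹ * s j := by
    simp [hp, mul_inv_rev, cs.inv_simple, mul_assoc]
  calc (p ^ k)⁻¹ * (s j * s i * s j) * p ^ k
      = (p ^ k)⁻¹ * p⁻¹ * (s j * p ^ k) := by rw [hq]; simp [mul_assoc]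
    _ = p⁻¹ ^ k * p⁻¹ * (p⁻¹ ^ k * s j) := by rw [sj_mul_pow cs i j k, inv_pow]
    _ = p⁻¹ ^ (2 * k + 1) * s j := by
        rw [show 2 * k + 1 = k + 1 + k from by ring, pow_add, pow_add, pow_one]
        simp [mul_assoc]

private lemma conj_eq_iff (p t x : W) : (p * t * p⁻¹ = x) ↔ (t = p⁻¹ * x * p) := by
  constructor
  · rintro rfl; group
  · rintro rfl; group

private lemma chi_conj (i j : B) (t : W) (k : ℕ) :
    chi cs i j ((s i * s j) ^ k * t * ((s i * s j) ^ k)⁻¹) =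
      (if t = ((s i * s j)⁻¹) ^ (2 * k) * s j then 1 else 0)
      + (if t = ((s i * s j)⁻¹) ^ (2 * k + 1) * s j then 1 else 0) := by
  simp only [chi, conj_eq_iff, conjB cs i j k, conjC cs i j k]

private lemma sum_chi (i j : B) (t : W) :
    ∑ k ∈ Finset.range (M i j), chi cs i j ((s i * s j) ^ k * t * ((s i * s j) ^ k)⁻¹) = 0 := by
  set m := M i j with hm
  set q := (s i * s j)⁻¹ with hq
  have hqm : q ^ m = 1 := by
    rw [hq, inv_pow, hm, cs.simple_mul_simple_pow, inv_one]
  have key : ∀ n : ℕ, ∑ k ∈ Finset.range n, chi cs i j ((s i * s j) ^ k * t * ((s i * s j) ^ k)⁻¹)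
      = ∑ l ∈ Finset.range (2 * n), (if t = q ^ l * s j then (1 : ZMod 2) else 0) := by
    intro n
    induction n with
    | zero => simp
    | succ n ih =>
      rw [Finset.sum_range_succ, ih, chi_conj,
        show 2 * (n + 1) = 2 * n + 1 + 1 from by ring,
        Finset.sum_range_succ, Finset.sum_range_succ, add_assoc]
  rw [key m, two_mul, Finset.sum_range_add]
  have hper : ∀ l, q ^ (m + l) = q ^ l := by
    intro l; rw [pow_add, hqm, one_mul]
  simp only [hper]
  rw [← Finset.sum_add_distrib]
  apply Finset.sum_eq_zero
  intro k _
  exact CharTwo.add_self_eq_zero _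


private lemma eta_liftable :
    M.IsLiftable (fun i => etaPerm cs i) := by
  intro i j
  apply Equiv.ext
  intro x
  show ((etaPerm cs i * etaPerm cs j) ^ M i j) x = x
  rw [etaPerm_pow_apply, sum_chi, add_zero, cs.simple_mul_simple_pow, one_mul, inv_one, mul_one]

/-- The permutation representation on `W × ZMod 2`. -/
private noncomputable def Phi : W →* Equiv.Perm (W × ZMod 2) :=
  cs.lift ⟨fun i => etaPerm cs i, eta_liftable cs⟩

private lemma Phi_simple (i : B) : Phi cs (s i) = etaPerm cs i :=
  cs.lift_apply_simple (eta_liftable cs) i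

/-- `ν w t` : the parity of the number of occurrences of `t` in any inversion
sequence of any word for `w`. -/
private noncomputable def nu (w t : W) : ZMod 2 := (Phi cs w (t, 0)).2

private lemma Phi_apply (w t : W) : ∀ e : ZMod 2,
    Phi cs w (t, e) = (w * t * w⁻¹, e + nu cs w t) := by
  induction w using cs.simple_induction_left with
  | one => intro e; simp [nu]
  | mul_simple_left u i ih =>
    intro e
    have key : ∀ e : ZMod 2, Phi cs (s i * u) (t, e) =
        (s i * (u * t * u⁻¹) * s i,
          e + nu cs u t + if u * t * u⁻¹ = s i then 1 else 0) := by
      intro e'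
      rw [map_mul, Equiv.Perm.mul_apply, ih e', Phi_simple, etaPerm_apply]
    have hnu : nu cs (s i * u) t = nu cs u t + if u * t * u⁻¹ = s i then 1 else 0 := by
      have := key 0
      simp only [nu, this, zero_add]
    rw [key e, hnu]
    refine Prod.ext ?_ (by simp [add_assoc])
    show s i * (u * t * u⁻¹) * s i = (s i * u) * t * (s i * u)⁻¹
    simp only [mul_inv_rev, cs.inv_simple, mul_assoc]


private lemma nu_mul (x y t : W) :
    nu cs (x * y) t = nu cs y t + nu cs x (y * t * y⁻¹) := by
  have h : Phi cs (x * y) (t, 0) = Phi cs x (Phi cs y (t, 0)) := by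
    rw [map_mul, Equiv.Perm.mul_apply]
  show (Phi cs (x * y) (t, 0)).2 = _
  rw [h, Phi_apply, Phi_apply]
  show 0 + nu cs y t + nu cs x (y * t * y⁻¹) = _
  rw [zero_add]

private lemma nu_simple (i : B) (t : W) :
    nu cs (s i) t = if t = s i then 1 else 0 := by
  simp only [nu, Phi_simple, etaPerm_apply, zero_add]

private lemma nu_inv (u t : W) : nu cs u⁻¹ (u * t * u⁻¹) = nu cs u t := by
  have h := nu_mul cs u⁻¹ u t
  rw [inv_mul_cancel] at h
  have h1 : nu cs (1 : W) t = 0 := by simp [nu]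
  rw [h1] at h
  have h2 := eq_neg_of_add_eq_zero_right h.symm
  rw [h2, CharTwo.neg_eq]

private lemma nu_refl {t : W} (ht : cs.IsReflection t) : nu cs t t = 1 := by
  obtain ⟨u, i, rfl⟩ := ht
  rw [mul_assoc]
  have e1 : (s i * u⁻¹) * (u * (s i * u⁻¹)) * (s i * u⁻¹)⁻¹ = s i := by
    simp only [mul_inv_rev, cs.inv_simple, inv_inv, mul_assoc, inv_mul_cancel_left,
      mul_inv_cancel_left, cs.simple_mul_simple_cancel_left]
  have e2 : u⁻¹ * (u * (s i * u⁻¹)) * (u⁻¹)⁻¹ = s i := by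
    simp only [inv_inv, mul_assoc, inv_mul_cancel_left, inv_mul_cancel, mul_one]
  have step1 : nu cs (u * (s i * u⁻¹)) (u * (s i * u⁻¹))
      = nu cs (s i * u⁻¹) (u * (s i * u⁻¹)) + nu cs u (s i) := by
    rw [nu_mul cs u (s i * u⁻¹) (u * (s i * u⁻¹)), e1]
  have step2 : nu cs (s i * u⁻¹) (u * (s i * u⁻¹))
      = nu cs u⁻¹ (u * (s i * u⁻¹)) + 1 := by
    rw [nu_mul cs (s i) u⁻¹ (u * (s i * u⁻¹)), e2, nu_simple, if_pos rfl]
  have step3 : nu cs u⁻¹ (u * (s i * u⁻¹)) = nu cs u (s i) := by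
    have h := nu_inv cs u (s i)
    rw [mul_assoc] at h
    exact h
  rw [step1, step2, step3]
  have : ∀ a : ZMod 2, a + 1 + a = 1 := by decide
  exact this _

private lemma nu_mul_reflection {t : W} (ht : cs.IsReflection t) (w : W) :
    nu cs (w * t) t = 1 + nu cs w t := by
  rw [nu_mul cs w t t]
  have h : t * t * t⁻¹ = t := by rw [ht.mul_self, one_mul, ht.inv]
  rw [h, nu_refl cs ht, add_comm]

private lemma nu_count (ω : List B) (t : W) :
    nu cs (π ω) t = ((cs.rightInvSeq ω).count t : ZMod 2) := by
  induction ω with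
  | nil => simp [nu]
  | cons i ω ih =>
    rw [cs.wordProd_cons, nu_mul cs (s i) (π ω) t, ih, nu_simple]
    have hris : cs.rightInvSeq (i :: ω) = ((π ω)⁻¹ * s i * π ω) :: cs.rightInvSeq ω := rfl
    rw [hris, List.count_cons]
    by_cases hc : t = (π ω)⁻¹ * s i * π ω
    · have hc' : π ω * t * (π ω)⁻¹ = s i := by
        rw [hc]
        group
      simp [hc, hc', add_comm]
      group
    · have hc' : ¬ (π ω * t * (π ω)⁻¹ = s i) := by
        intro h
        exact hc ((conj_eq_iff (π ω) t (s i)).mp h)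
      have hc2 : ¬ ((π ω)⁻¹ * s i * π ω = t) := fun h => hc h.symm
      simp [hc', hc2]


private lemma erase_of_mem_ris {t : W} (σ : List B) (hmem : t ∈ cs.rightInvSeq σ) :
    ∃ j < σ.length, π σ * t = π (σ.eraseIdx j) := by
  obtain ⟨j, hj, hget⟩ := List.getElem_of_mem hmem
  have hj' : j < σ.length := by
    have := cs.length_rightInvSeq σ
    omega
  refine ⟨j, hj', ?_⟩
  have hgd : (cs.rightInvSeq σ).getD j 1 = t := by
    rw [List.getD_eq_getElem _ _ hj, hget]
  have := cs.wordProd_mul_getD_rightInvSeq σ j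
  rwa [hgd] at this

private lemma nu_eq_one_of_isRightInversion {t : W} (ht : cs.IsReflection t) {w : W}
    (hl : cs.length (w * t) < cs.length w) : nu cs w t = 1 := by
  have htwo : ∀ x : ZMod 2, x = 0 ∨ x = 1 := by decide
  rcases htwo (nu cs w t) with h0 | h1
  · exfalso
    obtain ⟨σ, hσred, hσ⟩ := cs.exists_reduced_word' (w * t)
    have hν : nu cs (π σ) t = 1 := by
      rw [← hσ, nu_mul_reflection cs ht, h0, add_zero]
    have hmem : t ∈ cs.rightInvSeq σ := by
      by_contra hmem
      rw [nu_count, List.count_eq_zero_of_not_mem hmem] at hν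
      simp at hν
    obtain ⟨j, hj, he⟩ := erase_of_mem_ris cs σ hmem
    have hlen : (σ.eraseIdx j).length + 1 = σ.length := List.length_eraseIdx_add_one hj
    have hww : π σ * t = w := by
      rw [← hσ, mul_assoc, ht.mul_self, mul_one]
    have hle : cs.length w ≤ σ.length - 1 := by
      rw [← hww, he]
      have := cs.length_wordProd_le (σ.eraseIdx j)
      omega
    have hlt : cs.length (w * t) = σ.length := by rw [hσ]; exact hσred
    omega
  · exact h1

private lemma strong_exchange {ω : List B} {t : W} (ht : cs.IsReflection t)
    (hl : cs.length (π ω * t) < cs.length (π ω)) :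
    ∃ j < ω.length, π ω * t = π (ω.eraseIdx j) := by
  have h1 := nu_eq_one_of_isRightInversion cs ht hl
  have hmem : t ∈ cs.rightInvSeq ω := by
    by_contra hmem
    rw [nu_count, List.count_eq_zero_of_not_mem hmem] at h1
    simp at h1
  exact erase_of_mem_ris cs ω hmem


private lemma wordProd_mem_par {Sg : Set W} {ω : List B} (h : ∀ i ∈ ω, s i ∈ Sg) :
    π ω ∈ par Sg := by
  induction ω with
  | nil => simp [Subgroup.one_mem]
  | cons i ω ih =>
    rw [cs.wordProd_cons]
    exact mul_mem (Subgroup.subset_closure (h i (by simp)))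
      (ih (fun j hj => h j (by simp [hj])))

private lemma exists_word_par {Sg : Set W} (hSg : Sg ⊆ simpleSet cs) {w : W}
    (hw : w ∈ par Sg) : ∃ ω : List B, π ω = w ∧ ∀ i ∈ ω, s i ∈ Sg := by
  induction hw using Subgroup.closure_induction with
  | mem x hx =>
    obtain ⟨i, hi⟩ := hSg hx
    exact ⟨[i], by simp [hi], by intro j hj; simp at hj; rw [hj, hi]; exact hx⟩
  | one => exact ⟨[], by simp, by simp⟩
  | mul x y hx hy ihx ihy =>
    obtain ⟨ω₁, h1, m1⟩ := ihx
    obtain ⟨ω₂, h2, m2⟩ := ihy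
    refine ⟨ω₁ ++ ω₂, by rw [cs.wordProd_append, h1, h2], ?_⟩
    intro i hi
    rcases List.mem_append.mp hi with h | h
    exacts [m1 i h, m2 i h]
  | inv x hx ihx =>
    obtain ⟨ω₁, h1, m1⟩ := ihx
    exact ⟨ω₁.reverse, by rw [cs.wordProd_reverse, h1], fun i hi => m1 i (List.mem_reverse.mp hi)⟩

private lemma exists_reduced_word_subset :
    ∀ n (ω : List B), ω.length = n →
      ∃ ω' : List B, cs.IsReduced ω' ∧ π ω' = π ω ∧ ∀ i ∈ ω', i ∈ ω := by
  intro n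
  induction n using Nat.strong_induction_on with
  | _ n ih =>
    intro ω hlen
    by_cases hred : cs.IsReduced ω
    · exact ⟨ω, hred, rfl, fun i h => h⟩
    · have hQ : ∃ k, ¬ cs.IsReduced (ω.take (k + 1)) := by
        refine ⟨ω.length - 1, ?_⟩
        have hne : ω.length ≠ 0 := by
          intro h0
          rw [List.length_eq_zero_iff] at h0
          exact hred (by simp [h0, CoxeterSystem.IsReduced])
        rw [show ω.length - 1 + 1 = ω.length from by omega, List.take_length]
        exact hred
      set k := Nat.find hQ with hkdef
      have hk : ¬ cs.IsReduced (ω.take (k + 1)) := Nat.find_spec hQ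
      have hkred : cs.IsReduced (ω.take k) := by
        rcases Nat.eq_zero_or_pos k with h0 | hpos
        · rw [h0]; simp [CoxeterSystem.IsReduced]
        · have hmin := Nat.find_min hQ (show k - 1 < k by omega)
          rw [show k - 1 + 1 = k from by omega] at hmin
          exact not_not.mp hmin
      have hklt : k < ω.length := by
        by_contra hge
        push_neg at hge
        rw [List.take_of_length_le hge] at hkred
        exact hred hkred
      have htake : ω.take (k + 1) = ω.take k ++ [ω[k]] := by
        rw [List.take_succ, List.getElem?_eq_getElem hklt]
        rfl
      have hlt : cs.length (π (ω.take k) * s (ω[k])) < cs.length (π (ω.take k)) := by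
        have hlenk : (ω.take k).length = k := by
          rw [List.length_take]; omega
        have hl1 : cs.length (π (ω.take k)) = k := by rw [hkred, hlenk]
        have h2 : cs.length (π (ω.take (k + 1))) ≠ (ω.take (k + 1)).length := hk
        rw [List.length_take, htake, cs.wordProd_append, cs.wordProd_singleton] at h2
        rcases cs.length_mul_simple (π (ω.take k)) (ω[k]) with hc | hc
        · exfalso; apply h2; rw [hc, hl1]; omega
        · have hne := cs.length_mul_simple_ne (π (ω.take k)) (ω[k])
          omega
      obtain ⟨j, hj, hjer⟩ := strong_exchange cs (cs.isReflection_simple (ω[k])) hlt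
      set ω' : List B := (ω.take k).eraseIdx j ++ ω.drop (k + 1) with hω'
      have hprod : π ω' = π ω := by
        rw [hω', cs.wordProd_append, ← hjer]
        conv_rhs => rw [← List.take_append_drop (k + 1) ω]
        rw [cs.wordProd_append, htake, cs.wordProd_append, cs.wordProd_singleton]
      have hlen' : ω'.length < n := by
        have h1 : ((ω.take k).eraseIdx j).length + 1 = (ω.take k).length :=
          List.length_eraseIdx_add_one hj
        have h2 : (ω.take k).length = k := by rw [List.length_take]; omega
        have h3 : (ω.drop (k + 1)).length = ω.length - (k + 1) := by
          rw [List.length_drop]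
        rw [hω', List.length_append]
        omega
      have hmem : ∀ i ∈ ω', i ∈ ω := by
        intro i hi
        rcases List.mem_append.mp hi with h | h
        · exact (ω.take_sublist k).subset (((ω.take k).eraseIdx_sublist j).subset h)
        · exact (ω.drop_sublist (k + 1)).subset h
      obtain ⟨ω'', hr, hp, hm⟩ := ih ω'.length hlen' ω' rfl
      exact ⟨ω'', hr, by rw [hp, hprod], fun i hi => hmem i (hm i hi)⟩

private lemma exists_reduced_word_par {Sg : Set W} (hSg : Sg ⊆ simpleSet cs) {w : W}
    (hw : w ∈ par Sg) :
    ∃ ω : List B, cs.IsReduced ω ∧ π ω = w ∧ ∀ i ∈ ω, s i ∈ Sg := by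
  obtain ⟨ω, hprod, hmem⟩ := exists_word_par cs hSg hw
  obtain ⟨ω', hr, hp, hm⟩ := exists_reduced_word_subset cs ω.length ω rfl
  exact ⟨ω', hr, by rw [hp, hprod], fun i hi => hmem i (hm i hi)⟩

private lemma mem_of_mem_par_length_one {Sg : Set W} (hSg : Sg ⊆ simpleSet cs) {w : W}
    (hw : w ∈ par Sg) (hl : cs.length w = 1) : w ∈ Sg := by
  obtain ⟨ω, hr, hp, hm⟩ := exists_reduced_word_par cs hSg hw
  have h1 : ω.length = 1 := by rw [← hr, hp, hl]
  obtain ⟨i, rfl⟩ := List.length_eq_one_iff.mp h1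
  rw [← hp, cs.wordProd_singleton]
  exact hm i (by simp)


private lemma length_mul_of_minRight {Sg : Set W} (hSg : Sg ⊆ simpleSet cs) {y : W}
    (hy : invSet cs y⁻¹ ∩ parRefl Sg = ∅) {w : W} (hw : w ∈ par Sg) :
    cs.length (y * w) = cs.length y + cs.length w := by
  obtain ⟨κ₀, hκred₀, hκw₀, hκmem₀⟩ := exists_reduced_word_par cs hSg hw
  have hlw : cs.length w = κ₀.length := by rw [← hκw₀, hκred₀]
  suffices H : ∀ n (κ : List B), κ.length = n → cs.IsReduced κ → (∀ i ∈ κ, s i ∈ Sg) →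
      cs.length (y * π κ) = cs.length y + n by
    rw [← hκw₀, show cs.length (π κ₀) = κ₀.length from hκred₀]
    exact H κ₀.length κ₀ rfl hκred₀ hκmem₀
  intro n
  induction n with
  | zero =>
    intro κ hκn _ _
    rw [List.length_eq_zero_iff] at hκn
    simp [hκn]
  | succ n ihn =>
    intro κ hκn hκred hκmem
    have hne : κ ≠ [] := by intro h0; rw [h0] at hκn; simp at hκn
    set i := κ.getLast hne with hi
    set κ' := κ.dropLast with hκ'
    have hsplit : κ' ++ [i] = κ := List.dropLast_append_getLast hne
    have hκ'len : κ'.length = n := by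
      have := congrArg List.length hsplit
      simp at this
      omega
    have hκ'red : cs.IsReduced κ' := by
      have : κ' = κ.take (κ.length - 1) := by rw [hκ', List.dropLast_eq_take]
      rw [this]
      exact hκred.take _
    have hκ'mem : ∀ j ∈ κ', s j ∈ Sg := fun j hj =>
      hκmem j (by rw [← hsplit]; exact List.mem_append_left _ hj)
    have ihs := ihn κ' hκ'len hκ'red hκ'mem
    have hπκ : π κ = π κ' * s i := by
      rw [← hsplit, cs.wordProd_append, cs.wordProd_singleton]
    rcases cs.length_mul_simple (y * π κ') i with hc | hc
    · rw [hπκ, ← mul_assoc, hc, ihs]; omega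
    · exfalso
      have hnez := cs.length_mul_simple_ne (y * π κ') i
      have hlt : cs.length (y * π κ' * s i) < cs.length (y * π κ') := by omega
      obtain ⟨ρ, hρlen, hρy⟩ := cs.exists_reduced_word y
      replace hρlen : ρ.length = cs.length y := by rw [hρy]; exact hρlen.symm
      have hτprod : π (ρ ++ κ') = y * π κ' := by rw [cs.wordProd_append, ← hρy]
      have hτred : cs.IsReduced (ρ ++ κ') := by
        show cs.length (π (ρ ++ κ')) = _
        rw [hτprod, ihs, List.length_append, hρlen, hκ'len]
      have hlt' : cs.length (π (ρ ++ κ') * s i) < cs.length (π (ρ ++ κ')) := by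
        rw [hτprod]; exact hlt
      obtain ⟨j, hj, hjer⟩ := strong_exchange cs (cs.isReflection_simple i) hlt'
      rcases lt_or_ge j ρ.length with hjρ | hjρ
      · -- erase in the ρ part : contradicts minimality of y
        rw [List.eraseIdx_append_of_lt_length hjρ, hτprod, cs.wordProd_append] at hjer
        set t := π κ' * s i * (π κ')⁻¹ with ht
        have hyt : y * t = π (ρ.eraseIdx j) := by
          rw [ht, ← mul_assoc, ← mul_assoc, hjer, mul_assoc, mul_inv_cancel, mul_one]
        have hytlen : cs.length (y * t) ≤ cs.length y - 1 := by
          rw [hyt]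
          have h1 := cs.length_wordProd_le (ρ.eraseIdx j)
          have h2 : (ρ.eraseIdx j).length + 1 = ρ.length := List.length_eraseIdx_add_one hjρ
          omega
        have hylen : 1 ≤ cs.length y := by omega
        have hrefl : cs.IsReflection t := (cs.isReflection_simple i).conj (π κ')
        have hmemInv : t ∈ invSet cs y⁻¹ := by
          refine ⟨hrefl, ?_⟩
          have : cs.length (t * y⁻¹) = cs.length (y * t) := by
            rw [← cs.length_inv (t * y⁻¹)]
            congr 1
            rw [mul_inv_rev, inv_inv, hrefl.inv]
          rw [this, cs.length_inv]
          omega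
        have hmemRefl : t ∈ parRefl Sg := by
          refine ⟨π κ', wordProd_mem_par cs hκ'mem, s i, ?_, rfl⟩
          exact hκmem i (by rw [hi]; exact List.getLast_mem hne)
        have : t ∈ invSet cs y⁻¹ ∩ parRefl Sg := ⟨hmemInv, hmemRefl⟩
        rw [hy] at this
        exact this
      · -- erase in the κ' part : contradicts reducedness of κ
        rw [List.eraseIdx_append_of_length_le hjρ, cs.wordProd_append, cs.wordProd_append,
          ← hρy, mul_assoc] at hjer
        have hcancel : π κ' * s i = π (κ'.eraseIdx (j - ρ.length)) :=
          mul_left_cancel hjer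
        have h1 : cs.length (π κ' * s i) = n + 1 := by
          rw [← hπκ, hκred, hκn]
        have h2 : cs.length (π (κ'.eraseIdx (j - ρ.length))) ≤ n - 1 := by
          have h3 := cs.length_wordProd_le (κ'.eraseIdx (j - ρ.length))
          have h4 : j - ρ.length < κ'.length := by
            rw [List.length_append] at hj
            omega
          have h5 : (κ'.eraseIdx (j - ρ.length)).length + 1 = κ'.length :=
            List.length_eraseIdx_add_one h4
          omega
        rw [hcancel] at h1
        omega

private lemma length_mul_of_minLeft {Sg' : Set W} (hSg' : Sg' ⊆ simpleSet cs) {y : W}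
    (hy : invSet cs y ∩ parRefl Sg' = ∅) {w : W} (hw : w ∈ par Sg') :
    cs.length (w * y) = cs.length w + cs.length y := by
  have hy' : invSet cs (y⁻¹)⁻¹ ∩ parRefl Sg' = ∅ := by rw [inv_inv]; exact hy
  have h := length_mul_of_minRight cs hSg' hy' (inv_mem hw : w⁻¹ ∈ par Sg')
  have : cs.length (w * y) = cs.length (y⁻¹ * w⁻¹) := by
    rw [← cs.length_inv (w * y), mul_inv_rev]
  rw [this, h, cs.length_inv, cs.length_inv]
  omega

end Aux


/-- for `y ∈ N(Σ, Σ')`, conjugation `Int_y : W_Σ → W_{Σ'}` preserves the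
length, hence sends `Σ` onto `Σ'` (an isomorphism of Coxeter systems) and `T_Σ` onto
`T_{Σ'}`. -/
theorem relN_conj_isom (Sg Sg' : Set W) (hSg : Sg ⊆ simpleSet cs)
    (hSg' : Sg' ⊆ simpleSet cs) (y : W) (hy : y ∈ relN cs Sg Sg') :
    (∀ w ∈ par Sg, cs.length (y * w * y⁻¹) = cs.length w) ∧
    (fun s => y * s * y⁻¹) '' Sg = Sg' ∧
    (fun t => y * t * y⁻¹) '' parRefl Sg = parRefl Sg' := by
  obtain ⟨hyR, hyL, hconj⟩ := hy
  have part1 : ∀ w ∈ par Sg, cs.length (y * w * y⁻¹) = cs.length w := by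
    intro w hw
    have hw' : y * w * y⁻¹ ∈ par Sg' := by
      rw [← SetLike.mem_coe, ← hconj]
      exact ⟨w, hw, rfl⟩
    have h1 : cs.length (y * w) = cs.length y + cs.length w :=
      length_mul_of_minRight cs hSg hyR hw
    have h2 : cs.length ((y * w * y⁻¹) * y) = cs.length (y * w * y⁻¹) + cs.length y :=
      length_mul_of_minLeft cs hSg' hyL hw'
    have h3 : (y * w * y⁻¹) * y = y * w := by group
    rw [h3, h1] at h2
    omega
  have part2 : (fun z => y * z * y⁻¹) '' Sg = Sg' := by
    apply Set.eq_of_subset_of_subset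
    · rintro x ⟨z, hz, rfl⟩
      have hzpar : z ∈ par Sg := Subgroup.subset_closure hz
      have hx' : y * z * y⁻¹ ∈ par Sg' := by
        rw [← SetLike.mem_coe, ← hconj]
        exact ⟨z, hzpar, rfl⟩
      have hz1 : cs.length z = 1 := by
        obtain ⟨i, hi⟩ := hSg hz
        rw [← hi, cs.length_simple]
      have : cs.length (y * z * y⁻¹) = 1 := by rw [part1 z hzpar, hz1]
      exact mem_of_mem_par_length_one cs hSg' hx' this
    · intro z' hz'
      have hz'par : z' ∈ par Sg' := Subgroup.subset_closure hz'
      have : z' ∈ (fun u => y * u * y⁻¹) '' (par Sg : Set W) := by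
        rw [hconj]; exact hz'par
      obtain ⟨z, hz, rfl⟩ := this
      have hz1 : cs.length z = 1 := by
        have h5 : cs.length (y * z * y⁻¹) = cs.length z := part1 z hz
        have hz'2 : y * z * y⁻¹ ∈ Sg' := hz'
        obtain ⟨i, hi⟩ := hSg' hz'2
        rw [← hi, cs.length_simple] at h5
        omega
      exact ⟨z, mem_of_mem_par_length_one cs hSg hz hz1, rfl⟩
  refine ⟨part1, part2, ?_⟩
  apply Set.eq_of_subset_of_subset
  · rintro x ⟨t, ⟨u, hu, z, hz, rfl⟩, rfl⟩
    refine ⟨y * u * y⁻¹, ?_, y * z * y⁻¹, ?_, by group⟩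
    · rw [← SetLike.mem_coe, ← hconj]; exact ⟨u, hu, rfl⟩
    · rw [← part2]; exact ⟨z, hz, rfl⟩
  · rintro t' ⟨u', hu', z', hz', rfl⟩
    have hu'' : u' ∈ (fun u => y * u * y⁻¹) '' (par Sg : Set W) := by
      rw [hconj]; exact hu'
    obtain ⟨u, hu, rfl⟩ := hu''
    have hz'' : z' ∈ (fun z => y * z * y⁻¹) '' Sg := by rw [part2]; exact hz'
    obtain ⟨z, hz, rfl⟩ := hz''
    exact ⟨u * z * u⁻¹, ⟨u, hu, z, hz, rfl⟩, by group⟩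

end RelativeCoxeter
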